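/- Let N, f ∈ ℕ with f < N and let n ∈ ℕ with n ≥ 1. Then N > n·f if and only if the semitopology AllBut(N,f) is n-twined. -/

import Mathlib

/-- A semitopology: a set of points together with a collection of open sets closed under
arbitrary unions (in particular the empty set is open) and containing the whole point set. -/
structure Semitopology (Pnt : Type*) where
  opens : Set (Set Pnt)
  sUnion_mem : ∀ C ⊆ opens, ⋃₀ C ∈ opens
  univ_mem : Set.univ ∈ opens

/-- A subset `P` is dense (w.r.t. a collection `opens` of open sets) when every nonempty
open set intersects `P`. -/
def IsDense {Pnt : Type*} (opens : Set (Set Pnt)) (P : Set Pnt) : Prop :=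
  ∀ O ∈ opens, O ≠ ∅ → (O ∩ P).Nonempty

/-- A subset `P` has a nonempty open interior when some nonempty open set is contained in `P`. -/
def Noi {Pnt : Type*} (opens : Set (Set Pnt)) (P : Set Pnt) : Prop :=
  ∃ O ∈ opens, O ≠ ∅ ∧ O ⊆ P

/-- A collection of open sets is n-twined when any n nonempty open sets have
nonempty intersection. -/
def Twined {Pnt : Type*} (opens : Set (Set Pnt)) (n : ℕ) : Prop :=
  ∀ Os : Fin n → Set Pnt, (∀ i, Os i ∈ opens ∧ Os i ≠ ∅) → (⋂ i, Os i).Nonempty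

/-- The open sets of the semitopology AllBut(N,f) on points {0,…,N−1}: the empty set
together with all subsets of cardinality at least N − f. -/
def allButOpens (N f : ℕ) : Set (Set (Fin N)) :=
  {O | O = ∅ ∨ N - f ≤ O.ncard}

lemma ncard_biUnion_le' {α ι : Type*} [Fintype α] (s : Finset ι) (t : ι → Set α) :
    (⋃ i ∈ s, t i).ncard ≤ ∑ i ∈ s, (t i).ncard := by
  classical
  induction s using Finset.induction with
  | empty => simp
  | insert a s h ih =>
    rw [Finset.set_biUnion_insert, Finset.sum_insert h]
    exact le_trans (Set.ncard_union_le _ _) (by omega)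

theorem stmt15 (N f n : ℕ) (hf : f < N) (hn : 1 ≤ n) :
    N > n * f ↔ Twined (allButOpens N f) n := by
  have hcardFin : Nat.card (Fin N) = N := by simp
  constructor
  · intro hN Os hOs
    by_contra hempty
    rw [Set.not_nonempty_iff_eq_empty] at hempty
    have hcover : (⋃ i, (Os i)ᶜ) = Set.univ := by
      rw [← Set.compl_iInter, hempty, Set.compl_empty]
    have hle : ∀ i, ((Os i)ᶜ).ncard ≤ f := by
      intro i
      obtain ⟨hmem, hne⟩ := hOs i
      rcases hmem with h | h
      · exact absurd h hne
      have h1 : (Os i).ncard + ((Os i)ᶜ).ncard = N := by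
        rw [Set.ncard_add_ncard_compl, hcardFin]
      omega
    have hU : (⋃ i, (Os i)ᶜ).ncard ≤ ∑ i : Fin n, ((Os i)ᶜ).ncard := by
      have := ncard_biUnion_le' (Finset.univ : Finset (Fin n)) (fun i => (Os i)ᶜ)
      simpa using this
    have hsum : ∑ i : Fin n, ((Os i)ᶜ).ncard ≤ n * f := by
      calc ∑ i : Fin n, ((Os i)ᶜ).ncard ≤ ∑ _i : Fin n, f :=
            Finset.sum_le_sum (fun i _ => hle i)
        _ = n * f := by simp [Finset.sum_const, mul_comm]
    rw [hcover, Set.ncard_univ, hcardFin] at hU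
    omega
  · intro htw
    by_contra hN
    push_neg at hN
    have hfpos : 0 < f := by
      rcases Nat.eq_zero_or_pos f with h | h
      · subst h; omega
      · exact h
    set Os : Fin n → Set (Fin N) := fun i => {x : Fin N | x.val / f ≠ i.val} with hOsdef
    have hcompl : ∀ i : Fin n, ({x : Fin N | x.val / f = i.val}).ncard ≤ f := by
      intro i
      have hinj : Set.InjOn (fun x : Fin N => (⟨x.val % f, Nat.mod_lt _ hfpos⟩ : Fin f))
          {x : Fin N | x.val / f = i.val} := by
        intro x hx y hy hxy
        simp only [Set.mem_setOf_eq] at hx hy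
        have hm : x.val % f = y.val % f := congrArg Fin.val hxy
        have : x.val = y.val := by
          conv_lhs => rw [← Nat.div_add_mod x.val f]
          conv_rhs => rw [← Nat.div_add_mod y.val f]
          rw [hx, hy, hm]
        exact Fin.ext this
      calc ({x : Fin N | x.val / f = i.val}).ncard
          = ((fun x : Fin N => (⟨x.val % f, Nat.mod_lt _ hfpos⟩ : Fin f)) ''
              {x : Fin N | x.val / f = i.val}).ncard := (Set.ncard_image_of_injOn hinj).symm
        _ ≤ (Set.univ : Set (Fin f)).ncard := Set.ncard_le_ncard (Set.subset_univ _)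
                (Set.finite_univ)
        _ = f := by rw [Set.ncard_univ]; simp
    have hOsmem : ∀ i, Os i ∈ allButOpens N f ∧ Os i ≠ ∅ := by
      intro i
      have hc : (Os i)ᶜ = {x : Fin N | x.val / f = i.val} := by
        ext x; simp [hOsdef]
      have hcard : (Os i).ncard + ((Os i)ᶜ).ncard = N := by
        rw [Set.ncard_add_ncard_compl, hcardFin]
      have h2 : ((Os i)ᶜ).ncard ≤ f := by rw [hc]; exact hcompl i
      have h3 : N - f ≤ (Os i).ncard := by omega
      constructor
      · exact Or.inr h3
      · intro hE
        rw [hE, Set.ncard_empty] at h3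
        omega
    have := htw Os hOsmem
    obtain ⟨x, hx⟩ := this
    simp only [Set.mem_iInter] at hx
    have hxlt : x.val / f < n := Nat.div_lt_of_lt_mul (lt_of_lt_of_le x.isLt (by rw [mul_comm] at hN; exact hN))
    exact hx ⟨x.val / f, hxlt⟩ rfl
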